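/- (Lieb–Ruskai) The map (A, K) ↦ K* A^{−1} K is jointly convex in the Loewner order: for positive definite A_1, A_2 and arbitrary matrices K_1, K_2, ((K_1+K_2)/2)* ((A_1+A_2)/2)^{−1} ((K_1+K_2)/2) ≤ (K_1* A_1^{−1} K_1 + K_2* A_2^{−1} K_2)/2. -/

import Mathlib

open Matrix
open scoped ComplexOrder

lemma half_pos_complex : (0:ℂ) < (1:ℂ)/2 := by
  rw [Complex.lt_def]; norm_num

lemma posSemidef_half_smul {k : Type*} [Fintype k] {M : Matrix k k ℂ}
    (h : M.PosSemidef) : (((1:ℂ)/2) • M).PosSemidef := by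
  constructor
  · rw [IsHermitian, conjTranspose_smul, h.1.eq]
    norm_num
  · intro x
    exact (h.smul half_pos_complex.le).2 x

lemma posDef_half_smul {k : Type*} [Fintype k] {M : Matrix k k ℂ}
    (h : M.PosDef) : (((1:ℂ)/2) • M).PosDef := by
  constructor
  · rw [IsHermitian, conjTranspose_smul, h.1.eq]
    norm_num
  · intro x hx
    exact (h.smul half_pos_complex).2 hx

lemma real_half_smul {k l : ℕ} (M : Matrix (Fin k) (Fin l) ℂ) :
    ((1:ℝ)/2) • M = ((1:ℂ)/2) • M := by
  ext i j
  simp [Complex.real_smul]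

/-- Lieb–Ruskai: the map `(A, K) ↦ K* A⁻¹ K` is jointly convex in the Loewner order. -/
theorem lieb_ruskai_joint_convexity {n m : ℕ}
    (A₁ A₂ : Matrix (Fin n) (Fin n) ℂ) (hA₁ : A₁.PosDef) (hA₂ : A₂.PosDef)
    (K₁ K₂ : Matrix (Fin n) (Fin m) ℂ) :
    (((1:ℂ)/2) • (K₁ᴴ * A₁⁻¹ * K₁ + K₂ᴴ * A₂⁻¹ * K₂) -
      (((1:ℂ)/2) • (K₁ + K₂))ᴴ * (((1:ℝ)/2) • (A₁ + A₂))⁻¹ *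
        (((1:ℂ)/2) • (K₁ + K₂))).PosSemidef := by
  have hA : (((1:ℝ)/2) • (A₁ + A₂)).PosDef := by
    rw [real_half_smul]
    exact posDef_half_smul (hA₁.add hA₂)
  haveI : Invertible (((1:ℝ)/2) • (A₁ + A₂)) :=
    invertibleOfIsUnitDet _ hA.det_pos.ne'.isUnit
  rw [← PosDef.fromBlocks₁₁ _ _ hA]
  have h1 : (fromBlocks A₁ K₁ K₁ᴴ (K₁ᴴ * A₁⁻¹ * K₁)).PosSemidef := by
    haveI : Invertible A₁ := invertibleOfIsUnitDet _ hA₁.det_pos.ne'.isUnit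
    rw [PosDef.fromBlocks₁₁ _ _ hA₁, sub_self]
    exact PosSemidef.zero
  have h2 : (fromBlocks A₂ K₂ K₂ᴴ (K₂ᴴ * A₂⁻¹ * K₂)).PosSemidef := by
    haveI : Invertible A₂ := invertibleOfIsUnitDet _ hA₂.det_pos.ne'.isUnit
    rw [PosDef.fromBlocks₁₁ _ _ hA₂, sub_self]
    exact PosSemidef.zero
  have key : fromBlocks (((1:ℝ)/2) • (A₁ + A₂)) (((1:ℂ)/2) • (K₁ + K₂))
      ((((1:ℂ)/2) • (K₁ + K₂))ᴴ)
      (((1:ℂ)/2) • (K₁ᴴ * A₁⁻¹ * K₁ + K₂ᴴ * A₂⁻¹ * K₂)) =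
      ((1:ℂ)/2) • (fromBlocks A₁ K₁ K₁ᴴ (K₁ᴴ * A₁⁻¹ * K₁) +
        fromBlocks A₂ K₂ K₂ᴴ (K₂ᴴ * A₂⁻¹ * K₂)) := by
    rw [fromBlocks_add, fromBlocks_smul, real_half_smul, conjTranspose_smul,
      conjTranspose_add]
    norm_num
  rw [key]
  exact posSemidef_half_smul (h1.add h2)
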